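/- Every finite semifield that is isotopic to the finite field GF(64) is isomorphic, as a ring, to GF(64); in particular its multiplication is associative and commutative. -/

import Mathlib

/-- A finite semifield: a finite nonassociative ring with identity in which
the product of any two nonzero elements is nonzero. -/
structure FiniteSemifield where
  D : Type
  [addGroup : AddCommGroup D]
  mul : D → D → D
  one : D
  finite : Finite D
  mul_add : ∀ a b c : D, mul a (b + c) = mul a b + mul a c
  add_mul : ∀ a b c : D, mul (a + b) c = mul a c + mul b c
  one_mul : ∀ a : D, mul one a = a
  mul_one : ∀ a : D, mul a one = a
  one_ne_zero : one ≠ (0 : D)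
  noZeroDiv : ∀ a b : D, mul a b = 0 → a = 0 ∨ b = 0

attribute [instance] FiniteSemifield.addGroup

/-- Right multiplication by the inverse of a nonzero field element,
as an additive equivalence. -/
def mulInvRightEquiv {K : Type*} [Field K] (c : K) (hc : c ≠ 0) : K ≃+ K where
  toFun x := x * c⁻¹
  invFun x := x * c
  left_inv x := by field_simp
  right_inv x := by field_simp
  map_add' x y := add_mul x y c⁻¹

/-- Every finite semifield isotopic to the finite field GF(64) is isomorphic,
as a ring, to GF(64); in particular its multiplication is associative and
commutative. -/
theorem isotope_of_GF64_is_GF64 (S : FiniteSemifield)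
    (hiso : ∃ F G H : S.D ≃+ GaloisField 2 6,
      ∀ a b : S.D, H (S.mul a b) = F a * G b) :
    (∃ φ : S.D ≃+ GaloisField 2 6, ∀ a b : S.D, φ (S.mul a b) = φ a * φ b) ∧
    (∀ a b c : S.D, S.mul (S.mul a b) c = S.mul a (S.mul b c)) ∧
    (∀ a b : S.D, S.mul a b = S.mul b a) := by
  obtain ⟨F, G, H, hFGH⟩ := hiso
  have hFe : F S.one ≠ 0 := by
    intro h
    exact S.one_ne_zero (by simpa using F.injective (by simpa using h))
  have hGe : G S.one ≠ 0 := by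
    intro h
    exact S.one_ne_zero (by simpa using G.injective (by simpa using h))
  have hHe : H S.one = F S.one * G S.one := by
    have := hFGH S.one S.one
    rwa [S.one_mul] at this
  have hHe0 : H S.one ≠ 0 := by
    rw [hHe]; exact mul_ne_zero hFe hGe
  have hHa : ∀ a : S.D, H a = F a * G S.one := by
    intro a
    have := hFGH a S.one
    rwa [S.mul_one] at this
  have hHb : ∀ b : S.D, H b = F S.one * G b := by
    intro b
    have := hFGH S.one b
    rwa [S.one_mul] at this
  set φ : S.D ≃+ GaloisField 2 6 := H.trans (mulInvRightEquiv (H S.one) hHe0) with hφdef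
  have hφ : ∀ a b : S.D, φ (S.mul a b) = φ a * φ b := by
    intro a b
    have h1 : φ (S.mul a b) = H (S.mul a b) * (H S.one)⁻¹ := rfl
    have h2 : φ a = H a * (H S.one)⁻¹ := rfl
    have h3 : φ b = H b * (H S.one)⁻¹ := rfl
    rw [h1, h2, h3, hFGH, hHa a, hHb b, hHe]
    field_simp
  refine ⟨⟨φ, hφ⟩, ?_, ?_⟩
  · intro a b c
    apply φ.injective
    rw [hφ, hφ, hφ, hφ, mul_assoc]
  · intro a b
    apply φ.injective
    rw [hφ, hφ, mul_comm]
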